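/- arXiv:2205.14835 — 2 statements merged into one kernel-verified Lean document; each statement's English description precedes it below -/
import Mathlib

section
/- Let σ = (s_1,…,s_k) be a word in S, b ∈ {0,1}^k, s' ∈ S, and w ∈ W. If there exists i ∈ {1,…,k} such that s'·φ_{σ|_{i−1},b|_{i−1}}(w) = φ_{σ|_{i−1},b|_{i−1}}(w)·s_i, then φ_{σ,b}(s'w) = φ_{σ,b}(w); otherwise φ_{σ,b}(s'w) = s'·φ_{σ,b}(w). Moreover the map φ_{σ,b} : W → W is order-preserving for the left weak order. -/
open Polynomial

namespace Paper

variable {B W : Type*} [Group W] {M : CoxeterMatrix B} (cs : CoxeterSystem M W)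

/-- The standard parabolic subgroup `W_J` generated by the simple reflections in `J`. -/
def WJ (J : Set B) : Subgroup W :=
  Subgroup.closure (cs.simple '' J)

/-- `w` is a minimal-length representative of its right coset `W_J w`, i.e. `w ∈ ᴶW`. -/
def IsMinRep (J : Set B) (w : W) : Prop :=
  ∀ u ∈ WJ cs J, cs.length w ≤ cs.length (u * w)

open scoped Classical in
/-- `w ·_J s`: equals `w * s` if `w * s ∈ ᴶW`, and `w` otherwise. -/
noncomputable def mulJ (J : Set B) (w : W) (i : B) : W :=
  if IsMinRep cs J (w * cs.simple i) then w * cs.simple i else w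

/-- `φ_{J,s,b}` : for `b = 1` the Bruhat-maximum of `{w ·_J s, w}` (equivalently, the longer
of the two), for `b = 0` the Bruhat-minimum (the shorter of the two). -/
noncomputable def phiJ (J : Set B) (i : B) (b : Bool) (w : W) : W :=
  if b then (if cs.length w ≤ cs.length (mulJ cs J w i) then mulJ cs J w i else w)
  else (if cs.length (mulJ cs J w i) ≤ cs.length w then mulJ cs J w i else w)

/-- `φ_{J,σ|_k,b|_k}(w)`: the composition `φ_{J,s_k,b_k} ∘ ⋯ ∘ φ_{J,s_1,b_1}` over the
length-`k` prefix of the word, applied to `w`. -/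
noncomputable def phiJUpTo (J : Set B) {n : ℕ} (σ : Fin n → B) (b : Fin n → Bool)
    (k : ℕ) (w : W) : W :=
  ((List.ofFn fun i : Fin n => ((σ i : B), (b i : Bool))).take k).foldl
    (fun v p => phiJ cs J p.1 p.2 v) w

/-- `φ_{J,σ,b} = φ_{J,s_n,b_n} ∘ ⋯ ∘ φ_{J,s_1,b_1}`. -/
noncomputable def phiJSeq (J : Set B) {n : ℕ} (σ : Fin n → B) (b : Fin n → Bool) (w : W) : W :=
  phiJUpTo cs J σ b n w

/-- `φ_{s,b}(w)`: `max(ws, w)` for `b = 1`, `min(ws, w)` for `b = 0` (in Bruhat order;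
equivalently by length, since `w` and `ws` are Bruhat-comparable). -/
noncomputable def phi (i : B) (b : Bool) (w : W) : W :=
  if b then (if cs.length w ≤ cs.length (w * cs.simple i) then w * cs.simple i else w)
  else (if cs.length (w * cs.simple i) ≤ cs.length w then w * cs.simple i else w)

/-- `φ_{σ|_k,b|_k}(w)` (the case `J = ∅`). -/
noncomputable def phiUpTo {n : ℕ} (σ : Fin n → B) (b : Fin n → Bool) (k : ℕ) (w : W) : W :=
  ((List.ofFn fun i : Fin n => ((σ i : B), (b i : Bool))).take k).foldl
    (fun v p => phi cs p.1 p.2 v) w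

/-- `φ_{σ,b}(w)` (the case `J = ∅`). -/
noncomputable def phiSeq {n : ℕ} (σ : Fin n → B) (b : Fin n → Bool) (w : W) : W :=
  phiUpTo cs σ b n w

/-- `b` is a `(σ,J)`-good word for `w`: `φ_{σ,b}(w) = w`, and for each left descent
`s ∈ D_L(w) ∩ J` there is a position `i` with
`φ_{σ|_{i-1},b|_{i-1}}(w) · s_i = s · φ_{σ|_{i-1},b|_{i-1}}(w)`. -/
def Good (J : Set B) {n : ℕ} (σ : Fin n → B) (w : W) (b : Fin n → Bool) : Prop :=
  phiSeq cs σ b w = w ∧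
  ∀ i0 ∈ J, cs.length (cs.simple i0 * w) < cs.length w →
    ∃ i : Fin n,
      cs.simple i0 * phiUpTo cs σ b (i : ℕ) w = phiUpTo cs σ b (i : ℕ) w * cs.simple (σ i)

/-- `|b| = b_1 + ⋯ + b_n`. -/
def wt {n : ℕ} (b : Fin n → Bool) : ℕ := ∑ i, if b i then 1 else 0

/-- Left weak order: `w' ≤_L w` iff `w = u * w'` with `ℓ(w) = ℓ(u) + ℓ(w')`. -/
def leL (w' w : W) : Prop :=
  ∃ u : W, w = u * w' ∧ cs.length w = cs.length u + cs.length w'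

end Paper

namespace Paper

section Aux

open List

variable {B W : Type*} [Group W] {M : CoxeterMatrix B} (cs : CoxeterSystem M W)

/-- Tits sign representation map. -/
def eta [DecidableEq W] (i : B) : Function.End (W × ℤˣ) :=
  fun p => (cs.simple i * p.1 * cs.simple i, if p.1 = cs.simple i then -p.2 else p.2)

lemma rightInvSeq_cons' (i : B) (ω : List B) :
    cs.rightInvSeq (i :: ω) =
      ((cs.wordProd ω)⁻¹ * cs.simple i * cs.wordProd ω) :: cs.rightInvSeq ω := rfl

lemma prod_eta_apply [DecidableEq W] (ω : List B) (w : W) (ε : ℤˣ) :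
    (List.prod (ω.map (eta cs)) : Function.End (W × ℤˣ)) (w, ε)
      = (cs.wordProd ω * w * (cs.wordProd ω)⁻¹,
          ε * (-1) ^ (List.count w (cs.rightInvSeq ω))) := by
  induction ω with
  | nil => simp [CoxeterSystem.wordProd_nil]; rfl
  | cons i ω ih =>
    have hmul : ∀ (f g : Function.End (W × ℤˣ)) (x : W × ℤˣ), (f * g) x = f (g x) := fun _ _ _ => rfl
    rw [List.map_cons, List.prod_cons, hmul, ih]
    show (cs.simple i * (cs.wordProd ω * w * (cs.wordProd ω)⁻¹) * cs.simple i,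
        if cs.wordProd ω * w * (cs.wordProd ω)⁻¹ = cs.simple i then _ else _) = _
    rw [rightInvSeq_cons', List.count_cons]
    simp only [beq_iff_eq]
    have hcond : (cs.wordProd ω * w * (cs.wordProd ω)⁻¹ = cs.simple i)
        ↔ ((cs.wordProd ω)⁻¹ * cs.simple i * cs.wordProd ω = w) := by
      constructor
      · intro h; rw [← h]; group
      · intro h; rw [← h]; group
    rw [CoxeterSystem.wordProd_cons]
    by_cases hc : cs.wordProd ω * w * (cs.wordProd ω)⁻¹ = cs.simple i
    · rw [if_pos hc, if_pos (hcond.mp hc)]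
      refine Prod.ext ?_ ?_
      · rw [mul_inv_rev, cs.inv_simple]; group
      · rw [pow_succ]
        simp [mul_comm, mul_assoc, mul_left_comm]
    · rw [if_neg hc, if_neg (fun h => hc (hcond.mpr h))]
      refine Prod.ext ?_ ?_
      · rw [mul_inv_rev, cs.inv_simple]; group
      · simp


lemma conj_pow_invol {x r : W} (hx : x * x = 1) (b : ℕ) :
    x * r ^ b * x = (x * r * x) ^ b := by
  induction b with
  | zero => simpa using hx
  | succ b ih =>
    have key : x * r ^ (b + 1) * x = (x * r ^ b * x) * (x * r * x) := by
      have h1 : (x * r ^ b * x) * (x * r * x) = x * r ^ b * (x * x) * r * x := by group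
      rw [h1, hx]; group
    rw [key, ih, ← pow_succ]

lemma simple_conj_base_i (i j : B) :
    cs.simple i * (cs.simple i * cs.simple j) * cs.simple i = (cs.simple i * cs.simple j)⁻¹ := by
  rw [mul_inv_rev, cs.inv_simple, cs.inv_simple, cs.simple_mul_simple_cancel_left]

lemma simple_conj_base_j (i j : B) :
    cs.simple j * (cs.simple i * cs.simple j) * cs.simple j = (cs.simple i * cs.simple j)⁻¹ := by
  rw [mul_inv_rev, cs.inv_simple, cs.inv_simple, ← mul_assoc, cs.simple_mul_simple_cancel_right]

lemma simple_conj_pow_i (i j : B) (b : ℕ) :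
    cs.simple i * (cs.simple i * cs.simple j) ^ b * cs.simple i
      = ((cs.simple i * cs.simple j) ^ b)⁻¹ := by
  rw [conj_pow_invol (cs.simple_mul_simple_self i), simple_conj_base_i, inv_pow]

lemma simple_conj_pow_j (i j : B) (b : ℕ) :
    cs.simple j * (cs.simple i * cs.simple j) ^ b * cs.simple j
      = ((cs.simple i * cs.simple j) ^ b)⁻¹ := by
  rw [conj_pow_invol (cs.simple_mul_simple_self j), simple_conj_base_j, inv_pow]

lemma comm_letter (i j : B) (k : ℕ) :
    cs.simple (if Even (k + M i j) then j else i)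
        * cs.wordProd (CoxeterSystem.alternatingWord i j (M i j))
      = cs.wordProd (CoxeterSystem.alternatingWord i j (M i j))
        * cs.simple (if Even k then j else i) := by
  have hprod := cs.prod_alternatingWord_eq_mul_pow i j (M i j)
  have hr : (cs.simple i * cs.simple j) ^ (M i j) = 1 := cs.simple_mul_simple_pow i j
  rcases Nat.even_or_odd (M i j) with hm | hm
  · have hiff : Even (k + M i j) ↔ Even k := by
      rw [Nat.even_add]; tauto
    have h2 : M i j / 2 + M i j / 2 = M i j := by
      obtain ⟨c, hc⟩ := hm; omega
    rw [hprod, if_pos hm, one_mul]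
    have hbb : (cs.simple i * cs.simple j) ^ (M i j / 2)
        * (cs.simple i * cs.simple j) ^ (M i j / 2) = 1 := by
      rw [← pow_add, h2]; exact hr
    have hinv : ((cs.simple i * cs.simple j) ^ (M i j / 2))⁻¹
        = (cs.simple i * cs.simple j) ^ (M i j / 2) := by
      rw [inv_eq_of_mul_eq_one_right hbb]
    have key : ∀ x : B,
        (cs.simple x * (cs.simple i * cs.simple j) ^ (M i j / 2) * cs.simple x
          = ((cs.simple i * cs.simple j) ^ (M i j / 2))⁻¹) →
        cs.simple x * (cs.simple i * cs.simple j) ^ (M i j / 2)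
          = (cs.simple i * cs.simple j) ^ (M i j / 2) * cs.simple x := by
      intro x hx
      rw [hinv] at hx
      calc cs.simple x * (cs.simple i * cs.simple j) ^ (M i j / 2)
          = (cs.simple x * (cs.simple i * cs.simple j) ^ (M i j / 2) * cs.simple x)
              * cs.simple x := by rw [mul_assoc, cs.simple_mul_simple_self, mul_one]
        _ = _ := by rw [hx]
    by_cases hk : Even k
    · rw [if_pos hk, if_pos (hiff.mpr hk)]
      exact key j (simple_conj_pow_j cs i j _)
    · rw [if_neg hk, if_neg (fun h => hk (hiff.mp h))]
      exact key i (simple_conj_pow_i cs i j _)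
  · have hnm : ¬ Even (M i j) := Nat.not_even_iff_odd.mpr hm
    have hiff : Even (k + M i j) ↔ ¬ Even k := by
      rw [Nat.even_add]; tauto
    have h2 : M i j / 2 + 1 + (M i j / 2) = M i j := by
      obtain ⟨c, hc⟩ := hm; omega
    rw [hprod, if_neg hnm]
    have hpow1 : (cs.simple i * cs.simple j) ^ (M i j / 2 + 1)
        * (cs.simple i * cs.simple j) ^ (M i j / 2) = 1 := by
      rw [← pow_add, h2]; exact hr
    by_cases hk : Even k
    · rw [if_pos hk, if_neg (fun h => (hiff.mp h) hk)]
      -- goal : s i * (s j * r^b) = (s j * r^b) * s j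
      have hrb : (cs.simple i * cs.simple j) ^ (M i j / 2) * cs.simple j
          = cs.simple j * ((cs.simple i * cs.simple j) ^ (M i j / 2))⁻¹ := by
        have := simple_conj_pow_j cs i j (M i j / 2)
        calc (cs.simple i * cs.simple j) ^ (M i j / 2) * cs.simple j
            = cs.simple j * (cs.simple j * (cs.simple i * cs.simple j) ^ (M i j / 2)
                * cs.simple j) := by
              rw [← mul_assoc, ← mul_assoc, cs.simple_mul_simple_self, one_mul]
          _ = _ := by rw [this]
      rw [mul_assoc, hrb, ← mul_assoc, ← mul_assoc, cs.simple_mul_simple_self, one_mul,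
        ← pow_succ']
      exact eq_inv_of_mul_eq_one_left hpow1
    · rw [if_neg hk, if_pos (hiff.mpr hk), ← mul_assoc,
        cs.simple_mul_simple_self, one_mul]
      -- goal : r^b = (s j * r^b) * s i
      have hrb : (cs.simple i * cs.simple j) ^ (M i j / 2) * cs.simple i
          = cs.simple i * ((cs.simple i * cs.simple j) ^ (M i j / 2))⁻¹ := by
        have h := simple_conj_pow_i cs i j (M i j / 2)
        calc (cs.simple i * cs.simple j) ^ (M i j / 2) * cs.simple i
            = cs.simple i * (cs.simple i * (cs.simple i * cs.simple j) ^ (M i j / 2)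
                * cs.simple i) := by
              rw [← mul_assoc, ← mul_assoc, cs.simple_mul_simple_self, one_mul]
          _ = _ := by rw [h]
      rw [mul_assoc, hrb, ← mul_assoc]
      have hj2 : cs.simple j * cs.simple i = (cs.simple i * cs.simple j)⁻¹ := by
        rw [mul_inv_rev, cs.inv_simple, cs.inv_simple]
      rw [hj2, ← mul_inv_rev, ← pow_succ]
      refine eq_inv_of_mul_eq_one_left ?_
      rw [← pow_add]
      have : M i j / 2 + (M i j / 2 + 1) = M i j := by omega
      rw [this]; exact hr



lemma wordProd_alt_add (i j : B) (k : ℕ) :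
    cs.wordProd (CoxeterSystem.alternatingWord i j (k + M i j))
      = cs.wordProd (CoxeterSystem.alternatingWord i j (M i j))
        * cs.wordProd (CoxeterSystem.alternatingWord i j k) := by
  induction k with
  | zero => simp [CoxeterSystem.alternatingWord]
  | succ k ih =>
    rw [show k + 1 + M i j = (k + M i j) + 1 from by omega,
      CoxeterSystem.alternatingWord_succ', cs.wordProd_cons, ih,
      CoxeterSystem.alternatingWord_succ' i j k, cs.wordProd_cons,
      ← mul_assoc, ← mul_assoc, comm_letter cs i j k]

lemma ris_alt_succ (i j : B) (n : ℕ) :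
    cs.rightInvSeq (CoxeterSystem.alternatingWord i j (n + 1))
      = ((cs.wordProd (CoxeterSystem.alternatingWord i j n))⁻¹
          * cs.simple (if Even n then j else i)
          * cs.wordProd (CoxeterSystem.alternatingWord i j n))
        :: cs.rightInvSeq (CoxeterSystem.alternatingWord i j n) := by
  rw [CoxeterSystem.alternatingWord_succ', rightInvSeq_cons']

lemma count_alt_add [DecidableEq W] (i j : B) (w : W) (k : ℕ) :
    List.count w (cs.rightInvSeq (CoxeterSystem.alternatingWord i j (k + M i j)))
      = List.count w (cs.rightInvSeq (CoxeterSystem.alternatingWord i j (M i j)))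
        + List.count w (cs.rightInvSeq (CoxeterSystem.alternatingWord i j k)) := by
  induction k with
  | zero =>
    show _ = _ + List.count w (cs.rightInvSeq (CoxeterSystem.alternatingWord i j 0))
    simp [CoxeterSystem.alternatingWord]
  | succ k ih =>
    have hcomm := comm_letter cs i j k
    have hg : (cs.wordProd (CoxeterSystem.alternatingWord i j (k + M i j)))⁻¹
          * cs.simple (if Even (k + M i j) then j else i)
          * cs.wordProd (CoxeterSystem.alternatingWord i j (k + M i j))
        = (cs.wordProd (CoxeterSystem.alternatingWord i j k))⁻¹
          * cs.simple (if Even k then j else i)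
          * cs.wordProd (CoxeterSystem.alternatingWord i j k) := by
      rw [wordProd_alt_add cs i j k, mul_inv_rev]
      calc (cs.wordProd (CoxeterSystem.alternatingWord i j k))⁻¹
            * (cs.wordProd (CoxeterSystem.alternatingWord i j (M i j)))⁻¹
            * cs.simple (if Even (k + M i j) then j else i)
            * (cs.wordProd (CoxeterSystem.alternatingWord i j (M i j))
              * cs.wordProd (CoxeterSystem.alternatingWord i j k))
          = (cs.wordProd (CoxeterSystem.alternatingWord i j k))⁻¹
            * (cs.wordProd (CoxeterSystem.alternatingWord i j (M i j)))⁻¹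
            * (cs.simple (if Even (k + M i j) then j else i)
              * cs.wordProd (CoxeterSystem.alternatingWord i j (M i j)))
            * cs.wordProd (CoxeterSystem.alternatingWord i j k) := by group
        _ = _ := by
            rw [hcomm]
            group
    rw [show k + 1 + M i j = (k + M i j) + 1 from by omega, ris_alt_succ, ris_alt_succ,
      List.count_cons, List.count_cons, ih, hg, add_assoc]

lemma count_alt_even [DecidableEq W] (i j : B) (w : W) :
    Even (List.count w (cs.rightInvSeq
      (CoxeterSystem.alternatingWord i j (2 * M i j)))) := by
  rw [show 2 * M i j = M i j + M i j from two_mul _, count_alt_add]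
  exact ⟨_, rfl⟩

lemma pow_eta_eq [DecidableEq W] (i j : B) (mm : ℕ) :
    (eta cs i * eta cs j) ^ mm
      = ((CoxeterSystem.alternatingWord i j (2 * mm)).map (eta cs)).prod := by
  induction mm with
  | zero => simp [CoxeterSystem.alternatingWord]
  | succ mm ih =>
    rw [show 2 * (mm + 1) = (2 * mm + 1) + 1 from by ring,
      CoxeterSystem.alternatingWord_succ', CoxeterSystem.alternatingWord_succ',
      if_neg (by simp [parity_simps]), if_pos (by simp [parity_simps] : Even (2 * mm)),
      List.map_cons, List.map_cons, List.prod_cons, List.prod_cons, ← ih,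
      pow_succ', mul_assoc]

lemma eta_liftable [DecidableEq W] : M.IsLiftable (eta cs) := by
  intro i j
  rw [pow_eta_eq]
  funext p
  obtain ⟨w, ε⟩ := p
  rw [prod_eta_apply]
  have hπ : cs.wordProd (CoxeterSystem.alternatingWord i j (2 * M i j)) = 1 := by
    rw [cs.prod_alternatingWord_eq_mul_pow, if_pos (even_two_mul _), one_mul,
      Nat.mul_div_cancel_left _ (by norm_num : 0 < 2)]
    exact cs.simple_mul_simple_pow i j
  obtain ⟨c, hc⟩ := count_alt_even cs i j w
  rw [hπ, hc]
  show ((1 : W) * w * 1⁻¹, ε * (-1) ^ (c + c)) = (w, ε)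
  refine Prod.ext ?_ ?_
  · simp
  · show ε * (-1) ^ (c + c) = ε
    rw [← two_mul, pow_mul]
    norm_num


lemma count_parity_invariant [DecidableEq W] {ω ω' : List B}
    (h : cs.wordProd ω = cs.wordProd ω') (w : W) :
    (-1 : ℤˣ) ^ (List.count w (cs.rightInvSeq ω))
      = (-1 : ℤˣ) ^ (List.count w (cs.rightInvSeq ω')) := by
  have key : ∀ ρ : List B,
      (cs.lift ⟨eta cs, eta_liftable cs⟩) (cs.wordProd ρ) = (ρ.map (eta cs)).prod := by
    intro ρ
    rw [CoxeterSystem.wordProd, map_list_prod, List.map_map]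
    congr 1
    refine List.map_congr_left (fun x _ => ?_)
    exact cs.lift_apply_simple (eta_liftable cs) x
  have h2 : ((ω.map (eta cs)).prod : Function.End (W × ℤˣ)) (w, 1)
      = ((ω'.map (eta cs)).prod : Function.End (W × ℤˣ)) (w, 1) := by
    rw [← key, ← key, h]
  rw [prod_eta_apply, prod_eta_apply, h] at h2
  have h3 := congrArg Prod.snd h2
  simpa using h3

theorem simple_mem_rightInvSeq_of_descent {w : W} {i : B}
    (hlt : cs.length (w * cs.simple i) < cs.length w)
    {Ω : List B} (hΩ : cs.IsReduced Ω) (hπ : cs.wordProd Ω = w) :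
    cs.simple i ∈ cs.rightInvSeq Ω := by
  classical
  obtain ⟨ω, hred, hv⟩ := cs.exists_reduced_word' (w * cs.simple i)
  have heven : Even (List.count (cs.simple i) (cs.rightInvSeq ω)) := by
    by_contra hodd
    have hpos : 0 < List.count (cs.simple i) (cs.rightInvSeq ω) := by
      rcases Nat.eq_zero_or_pos (List.count (cs.simple i) (cs.rightInvSeq ω)) with h0 | h0
      · exact absurd (h0 ▸ Even.zero) hodd
      · exact h0
    have hmem : cs.simple i ∈ cs.rightInvSeq ω := List.count_pos_iff.mp hpos
    have hinv := cs.isRightInversion_of_mem_rightInvSeq hred hmem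
    rw [← hv] at hinv
    have h2 := hinv.2
    rw [cs.simple_mul_simple_cancel_right] at h2
    omega
  have hw : cs.wordProd (ω.concat i) = cs.wordProd Ω := by
    rw [cs.wordProd_concat, ← hv, cs.simple_mul_simple_cancel_right, hπ]
  have hpar := count_parity_invariant cs hw (cs.simple i)
  have hcc : List.count (cs.simple i) (cs.rightInvSeq (ω.concat i))
      = List.count (cs.simple i) (cs.rightInvSeq ω) + 1 := by
    rw [cs.rightInvSeq_concat, List.concat_eq_append, List.count_append]
    have hinj : Function.Injective (⇑(MulAut.conj (cs.simple i)) : W → W) :=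
      (MulAut.conj (cs.simple i)).injective
    have hfix : (MulAut.conj (cs.simple i)) (cs.simple i) = cs.simple i := by
      rw [MulAut.conj_apply, cs.inv_simple, cs.simple_mul_simple_cancel_right]
    have hcm : List.count (cs.simple i)
        (List.map (⇑(MulAut.conj (cs.simple i))) (cs.rightInvSeq ω))
        = List.count (cs.simple i) (cs.rightInvSeq ω) := by
      have hh := List.count_map_of_injective (cs.rightInvSeq ω)
        (⇑(MulAut.conj (cs.simple i))) hinj (cs.simple i)
      rw [hfix] at hh
      exact hh
    rw [hcm]
    simp
  rw [hcc] at hpar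
  obtain ⟨c, hc⟩ := heven
  have hoddΩ : Odd (List.count (cs.simple i) (cs.rightInvSeq Ω)) := by
    by_contra hev
    have hevΩ : Even (List.count (cs.simple i) (cs.rightInvSeq Ω)) :=
      Nat.not_odd_iff_even.mp hev
    rw [hevΩ.neg_one_pow] at hpar
    have : Odd (List.count (cs.simple i) (cs.rightInvSeq ω) + 1) := by
      rw [hc]; exact ⟨c, by ring⟩
    rw [this.neg_one_pow] at hpar
    exact absurd hpar (by decide)
  have : 0 < List.count (cs.simple i) (cs.rightInvSeq Ω) := by
    rcases hoddΩ with ⟨c', hc'⟩; omega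
  exact List.count_pos_iff.mp this

theorem hard_right {x : W} (i i' : B)
    (h1 : cs.length (cs.simple i * x) = cs.length x + 1)
    (h2 : cs.length (x * cs.simple i') = cs.length x + 1)
    (h3 : cs.length (cs.simple i * x * cs.simple i') = cs.length x) :
    x * cs.simple i' = cs.simple i * x := by
  obtain ⟨ω₀, hlen, hx⟩ := cs.exists_reduced_word x
  have hred₀ : cs.IsReduced ω₀ := by
    unfold CoxeterSystem.IsReduced
    exact hlen
  have hπ : cs.wordProd (i :: ω₀) = cs.simple i * x := by
    rw [cs.wordProd_cons, ← hx]
  have hredΩ : cs.IsReduced (i :: ω₀) := by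
    unfold CoxeterSystem.IsReduced
    rw [hπ, h1, List.length_cons, hx]; exact congrArg (· + 1) hlen
  have hd : cs.length ((cs.simple i * x) * cs.simple i') < cs.length (cs.simple i * x) := by
    rw [h3, h1]; omega
  have hmem := simple_mem_rightInvSeq_of_descent cs hd hredΩ hπ
  rw [rightInvSeq_cons'] at hmem
  rcases List.mem_cons.mp hmem with hhead | htail
  · rw [← hx] at hhead
    rw [hhead]
    group
  · have hinv := cs.isRightInversion_of_mem_rightInvSeq hred₀ htail
    rw [← hx] at hinv
    have := hinv.2
    omega

theorem hard_left {u : W} (i' i : B)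
    (h1 : cs.length (cs.simple i' * u) = cs.length u + 1)
    (h2 : cs.length (u * cs.simple i) = cs.length u + 1)
    (h3 : cs.length (cs.simple i' * u * cs.simple i) = cs.length u) :
    cs.simple i' * u = u * cs.simple i := by
  have e1 : cs.length (cs.simple i * u⁻¹) = cs.length u⁻¹ + 1 := by
    rw [show cs.simple i * u⁻¹ = (u * cs.simple i)⁻¹ by rw [mul_inv_rev, cs.inv_simple],
      cs.length_inv, cs.length_inv, h2]
  have e2 : cs.length (u⁻¹ * cs.simple i') = cs.length u⁻¹ + 1 := by
    rw [show u⁻¹ * cs.simple i' = (cs.simple i' * u)⁻¹ by rw [mul_inv_rev, cs.inv_simple],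
      cs.length_inv, cs.length_inv, h1]
  have e3 : cs.length (cs.simple i * u⁻¹ * cs.simple i') = cs.length u⁻¹ := by
    rw [show cs.simple i * u⁻¹ * cs.simple i' = (cs.simple i' * u * cs.simple i)⁻¹ by
      rw [mul_inv_rev, mul_inv_rev, cs.inv_simple, cs.inv_simple, mul_assoc],
      cs.length_inv, cs.length_inv, h3]
  have := hard_right cs i i' e1 e2 e3
  have h4 := congrArg (fun z : W => z⁻¹) this
  simp only [mul_inv_rev, cs.inv_simple, inv_inv] at h4
  exact h4



lemma length_up_of_ne {u : W} {i' i : B}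
    (h1 : cs.length (cs.simple i' * u) = cs.length u + 1)
    (hne : cs.simple i' * u ≠ u * cs.simple i) :
    cs.length (cs.simple i' * u * cs.simple i) = cs.length (u * cs.simple i) + 1 := by
  rcases cs.length_mul_simple u i with h2 | h2
  · rcases cs.length_simple_mul (u * cs.simple i) i' with h3 | h3
    · rw [← mul_assoc] at h3; exact h3
    · exfalso
      apply hne
      apply hard_left cs i' i h1 h2
      rw [← mul_assoc] at h3
      omega
  · rcases cs.length_mul_simple (cs.simple i' * u) i with h3 | h3
    · exfalso
      rcases cs.length_simple_mul (u * cs.simple i) i' with h4 | h4 <;>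
        rw [← mul_assoc] at h4 <;> omega
    · omega

lemma length_down_of_ne {u : W} {i' i : B}
    (h1 : cs.length (cs.simple i' * u) + 1 = cs.length u)
    (hne : cs.simple i' * u ≠ u * cs.simple i) :
    cs.length (cs.simple i' * u * cs.simple i) + 1 = cs.length (u * cs.simple i) := by
  set v := cs.simple i' * u with hv
  have hu : cs.simple i' * v = u := by rw [hv, cs.simple_mul_simple_cancel_left]
  have h1' : cs.length (cs.simple i' * v) = cs.length v + 1 := by rw [hu]; omega
  have hne' : cs.simple i' * v ≠ v * cs.simple i := by
    intro h
    apply hne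
    rw [hu] at h
    -- h : u = v * cs.simple i
    rw [h, cs.simple_mul_simple_cancel_right]
  have hres := length_up_of_ne cs h1' hne'
  rw [hu] at hres
  omega

lemma phi_collapse (i' i : B) (b : Bool) {w : W} (h : cs.simple i' * w = w * cs.simple i) :
    phi cs i b (cs.simple i' * w) = phi cs i b w := by
  have hns : cs.length (w * cs.simple i) ≠ cs.length w := cs.length_mul_simple_ne w i
  rw [h]
  unfold phi
  rw [cs.simple_mul_simple_cancel_right]
  split_ifs <;> first | rfl | omega

lemma phi_comm (i' i : B) (b : Bool) {w : W} (hne : cs.simple i' * w ≠ w * cs.simple i) :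
    phi cs i b (cs.simple i' * w) = cs.simple i' * phi cs i b w := by
  rcases cs.length_simple_mul w i' with h1 | h1
  · have h2 := length_up_of_ne cs h1 hne
    unfold phi
    split_ifs <;> first | (exfalso; omega) | rw [mul_assoc] | rfl
  · have h2 := length_down_of_ne cs h1 hne
    unfold phi
    split_ifs <;> first | (exfalso; omega) | rw [mul_assoc] | rfl

lemma phi_len (i' i : B) (b : Bool) {w : W}
    (h1 : cs.length (cs.simple i' * w) = cs.length w + 1)
    (hne : cs.simple i' * w ≠ w * cs.simple i) :
    cs.length (cs.simple i' * phi cs i b w) = cs.length (phi cs i b w) + 1 := by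
  have h2 := length_up_of_ne cs h1 hne
  unfold phi
  split_ifs <;> first | exact h1 | (rw [← mul_assoc]; exact h2)

noncomputable def phiL (l : List (B × Bool)) (w : W) : W :=
  l.foldl (fun v p => phi cs p.1 p.2 v) w

lemma phiL_nil (w : W) : phiL cs [] w = w := rfl

lemma phiL_cons (p : B × Bool) (t : List (B × Bool)) (w : W) :
    phiL cs (p :: t) w = phiL cs t (phi cs p.1 p.2 w) := rfl

def CondL (i' : B) (l : List (B × Bool)) (w : W) : Prop :=
  ∃ j : Fin l.length,
    cs.simple i' * phiL cs (l.take j) w = phiL cs (l.take j) w * cs.simple (l.get j).1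

lemma phiL_main (i' : B) : ∀ (l : List (B × Bool)) (w : W),
    (CondL cs i' l w → phiL cs l (cs.simple i' * w) = phiL cs l w)
    ∧ (¬ CondL cs i' l w → phiL cs l (cs.simple i' * w) = cs.simple i' * phiL cs l w) := by
  intro l
  induction l with
  | nil =>
    intro w
    constructor
    · rintro ⟨⟨j, hj⟩, -⟩; exact absurd hj (by simp)
    · intro _; rfl
  | cons p t ih =>
    intro w
    by_cases h0 : cs.simple i' * w = w * cs.simple p.1
    · have hc : phi cs p.1 p.2 (cs.simple i' * w) = phi cs p.1 p.2 w :=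
        phi_collapse cs i' p.1 p.2 h0
      constructor
      · intro _; rw [phiL_cons, phiL_cons, hc]
      · intro hn
        exfalso
        exact hn ⟨⟨0, by simp⟩, by simpa [phiL_nil] using h0⟩
    · have hc : phi cs p.1 p.2 (cs.simple i' * w) = cs.simple i' * phi cs p.1 p.2 w :=
        phi_comm cs i' p.1 p.2 h0
      have hbridge : CondL cs i' (p :: t) w ↔ CondL cs i' t (phi cs p.1 p.2 w) := by
        constructor
        · rintro ⟨⟨j, hj⟩, hcond⟩
          cases j with
          | zero => exact absurd (by simpa [phiL_nil] using hcond) h0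
          | succ j =>
            refine ⟨⟨j, by simpa using hj⟩, ?_⟩
            simpa [phiL_cons] using hcond
        · rintro ⟨⟨j, hj⟩, hcond⟩
          refine ⟨⟨j + 1, by simpa using hj⟩, ?_⟩
          simpa [phiL_cons] using hcond
      constructor
      · intro hcnd
        rw [phiL_cons, phiL_cons, hc]
        exact (ih (phi cs p.1 p.2 w)).1 (hbridge.mp hcnd)
      · intro hn
        rw [phiL_cons, phiL_cons, hc]
        exact (ih _).2 (fun hcnd => hn (hbridge.mpr hcnd))

lemma phiL_len (i' : B) : ∀ (l : List (B × Bool)) (w : W),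
    cs.length (cs.simple i' * w) = cs.length w + 1 → ¬ CondL cs i' l w →
    cs.length (cs.simple i' * phiL cs l w) = cs.length (phiL cs l w) + 1 := by
  intro l
  induction l with
  | nil => intro w h _; exact h
  | cons p t ih =>
    intro w h hn
    have h0 : cs.simple i' * w ≠ w * cs.simple p.1 := fun hh =>
      hn ⟨⟨0, by simp⟩, by simpa [phiL_nil] using hh⟩
    have hlen := phi_len cs i' p.1 p.2 h h0
    rw [phiL_cons]
    apply ih _ hlen
    intro hcnd
    apply hn
    rcases hcnd with ⟨⟨j, hj⟩, hcd⟩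
    exact ⟨⟨j + 1, by simpa using hj⟩, by simpa [phiL_cons] using hcd⟩

lemma leL_refl (v : W) : leL cs v v :=
  ⟨1, by rw [one_mul], by rw [cs.length_one, Nat.zero_add]⟩

lemma leL_trans {a b c : W} (h1 : leL cs a b) (h2 : leL cs b c) : leL cs a c := by
  obtain ⟨u1, hb, hl1⟩ := h1
  obtain ⟨u2, hc, hl2⟩ := h2
  refine ⟨u2 * u1, by rw [hc, hb, mul_assoc], ?_⟩
  have haux : cs.length (u2 * u1 * a) ≤ cs.length (u2 * u1) + cs.length a :=
    cs.length_mul_le _ _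
  have haux2 : cs.length (u2 * u1) ≤ cs.length u2 + cs.length u1 := cs.length_mul_le _ _
  have hca : c = u2 * u1 * a := by rw [hc, hb, mul_assoc]
  rw [← hca] at haux
  omega

lemma phiL_step_leL (i' : B) (l : List (B × Bool)) {x : W}
    (h : cs.length (cs.simple i' * x) = cs.length x + 1) :
    leL cs (phiL cs l x) (phiL cs l (cs.simple i' * x)) := by
  by_cases hcnd : CondL cs i' l x
  · rw [(phiL_main cs i' l x).1 hcnd]; exact leL_refl cs _
  · rw [(phiL_main cs i' l x).2 hcnd]
    refine ⟨cs.simple i', rfl, ?_⟩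
    have := phiL_len cs i' l x h hcnd
    rw [cs.length_simple]
    omega

lemma phiL_mono (l : List (B × Bool)) :
    ∀ v v' : W, leL cs v v' → leL cs (phiL cs l v) (phiL cs l v') := by
  have main : ∀ n (u v : W), cs.length u = n →
      cs.length (u * v) = cs.length u + cs.length v →
      leL cs (phiL cs l v) (phiL cs l (u * v)) := by
    intro n
    induction n using Nat.strong_induction_on with
    | _ n ih =>
      intro u v hn hadd
      rcases eq_or_ne u 1 with rfl | hu1
      · rw [one_mul]; exact leL_refl cs _
      · obtain ⟨i, hdesc⟩ := cs.exists_leftDescent_of_ne_one hu1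
        have hdesc' : cs.length (cs.simple i * u) < cs.length u := hdesc
        have hsu : cs.length (cs.simple i * u) + 1 = cs.length u := by
          rcases cs.length_simple_mul u i with h | h <;> omega
        set u₁ := cs.simple i * u with hu₁
        have hu_eq : u = cs.simple i * u₁ := by
          rw [hu₁, cs.simple_mul_simple_cancel_left]
        have hle1 : cs.length (u₁ * v) ≤ cs.length u₁ + cs.length v := cs.length_mul_le _ _
        have hge : cs.length (u * v) ≤ cs.length (u₁ * v) + 1 := by
          rw [hu_eq, mul_assoc]
          rcases cs.length_simple_mul (u₁ * v) i with h | h <;> omega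
        have h3 : cs.length (u₁ * v) = cs.length u₁ + cs.length v := by omega
        have h4 : cs.length (cs.simple i * (u₁ * v)) = cs.length (u₁ * v) + 1 := by
          rw [← mul_assoc, ← hu_eq]; omega
        have ih1 := ih (cs.length u₁) (by omega) u₁ v rfl h3
        have step := phiL_step_leL cs i l h4
        have heq : u * v = cs.simple i * (u₁ * v) := by rw [hu_eq, mul_assoc]
        rw [heq]
        exact leL_trans cs ih1 step
  rintro v v' ⟨u, hv', hlen⟩
  rw [hv']
  rw [hv'] at hlen
  exact main (cs.length u) u v rfl hlen


end Aux

/-- For a word `σ = (s_1,…,s_k)`, `b ∈ {0,1}^k`, `s' ∈ S` and `w ∈ W`: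
if there is `i` with `s'·φ_{σ|_{i-1},b|_{i-1}}(w) = φ_{σ|_{i-1},b|_{i-1}}(w)·s_i` then
`φ_{σ,b}(s'w) = φ_{σ,b}(w)`; otherwise `φ_{σ,b}(s'w) = s'·φ_{σ,b}(w)`. Moreover
`φ_{σ,b} : W → W` is order-preserving for the left weak order. -/
theorem phiSeq_mul_simple_left {B W : Type*} [Group W] {M : CoxeterMatrix B}
    (cs : CoxeterSystem M W) {k : ℕ} (σ : Fin k → B) (b : Fin k → Bool) (i' : B) (w : W) :
    ((∃ i : Fin k,
        cs.simple i' * phiUpTo cs σ b (i : ℕ) w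
          = phiUpTo cs σ b (i : ℕ) w * cs.simple (σ i)) →
      phiSeq cs σ b (cs.simple i' * w) = phiSeq cs σ b w) ∧
    ((¬ ∃ i : Fin k,
        cs.simple i' * phiUpTo cs σ b (i : ℕ) w
          = phiUpTo cs σ b (i : ℕ) w * cs.simple (σ i)) →
      phiSeq cs σ b (cs.simple i' * w) = cs.simple i' * phiSeq cs σ b w) ∧
    (∀ v v' : W, leL cs v v' → leL cs (phiSeq cs σ b v) (phiSeq cs σ b v')) := by
  set f : Fin k → B × Bool := fun i => (σ i, b i) with hf
  set l : List (B × Bool) := List.ofFn f with hl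
  have hlen : l.length = k := by rw [hl, List.length_ofFn]
  have hup : ∀ (m : ℕ) (x : W), phiUpTo cs σ b m x = phiL cs (l.take m) x := fun _ _ => rfl
  have hseq : ∀ x : W, phiSeq cs σ b x = phiL cs l x := by
    intro x
    show phiL cs (l.take k) x = phiL cs l x
    rw [← hlen, List.take_length]
  have hcondiff : ∀ x : W,
      (∃ i : Fin k, cs.simple i' * phiUpTo cs σ b (i : ℕ) x
          = phiUpTo cs σ b (i : ℕ) x * cs.simple (σ i)) ↔ CondL cs i' l x := by
    intro x
    constructor
    · rintro ⟨i, hi⟩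
      refine ⟨⟨i.1, by omega⟩, ?_⟩
      have hget : (l.get ⟨i.1, by omega⟩).1 = σ i := by
        simp [hl, hf, List.get_ofFn]
      rw [hget, ← hup]
      exact hi
    · rintro ⟨⟨j, hj⟩, hcond⟩
      refine ⟨⟨j, by omega⟩, ?_⟩
      have hget : (l.get ⟨j, hj⟩).1 = σ ⟨j, by omega⟩ := by
        simp [hl, hf, List.get_ofFn]
      rw [hget] at hcond
      rw [hup]
      exact hcond
  refine ⟨?_, ?_, ?_⟩
  · intro hex
    rw [hseq, hseq]
    exact (phiL_main cs i' l w).1 ((hcondiff w).mp hex)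
  · intro hnex
    rw [hseq, hseq]
    exact (phiL_main cs i' l w).2 (fun hc => hnex ((hcondiff w).mpr hc))
  · intro v v' hvv
    rw [hseq, hseq]
    exact phiL_mono cs l v v' hvv


end Paper
end

section
/- Suppose the word σ = (s_1,…,s_n) contains every simple reflection of S (i.e., for each s ∈ S there is some i with s_i = s). Then the unique maximal element of ^JW is the only w ∈ ^JW satisfying φ_{J,σ,(1,1,…,1)}(w) = w. Consequently c_J(σ) is a monic polynomial of degree n in q: c_J(σ) = q^n + (terms of degree strictly less than n). -/
open Polynomial

namespace Paper

variable {B W : Type*} [Group W] {M : CoxeterMatrix B} (cs : CoxeterSystem M W)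

section Development

open List

local prefix:100 "s" => cs.simple
local prefix:100 "π" => cs.wordProd
local prefix:100 "ℓ" => cs.length

private lemma conj_eq_iff (g x y : W) : g⁻¹ * x * g = y ↔ x = g * y * g⁻¹ := by
  constructor
  · rintro rfl; group
  · rintro rfl; group

/-- Conjugation action of `W` on sign-valued functions on `W`. -/
def muPhi : W →* MulAut (W → ℤˣ) where
  toFun w :=
    { toFun := fun f t => f (w⁻¹ * t * w)
      invFun := fun f t => f (w * t * w⁻¹)
      left_inv := fun f => by funext t; simp [mul_assoc]
      right_inv := fun f => by funext t; simp [mul_assoc]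
      map_mul' := fun f g => rfl }
  map_one' := by ext f t; simp
  map_mul' x y := by ext f t; simp [mul_assoc]

@[simp] lemma muPhi_apply (w : W) (f : W → ℤˣ) (t : W) :
    muPhi w f t = f (w⁻¹ * t * w) := rfl

open scoped Classical in
/-- The generator of the sign representation. -/
noncomputable def muGen (i : B) : (W → ℤˣ) ⋊[muPhi (W := W)] W :=
  ⟨fun t => if t = cs.simple i then -1 else 1, cs.simple i⟩

lemma muGen_liftable (i j : B) :
    (muGen cs i * muGen cs j) ^ M i j = 1 := by
  classical
  set m := M i j with hm
  set c : W := s i * s j with hc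
  have hcm : c ^ m = 1 := cs.simple_mul_simple_pow i j
  set a := muGen cs i * muGen cs j with ha
  have haright : a.right = c := rfl
  have hpow_right : ∀ k : ℕ, (a ^ k).right = c ^ k := by
    intro k
    induction k with
    | zero => simp
    | succ k ih => rw [pow_succ, SemidirectProduct.mul_right, ih, haright, pow_succ]
  have hpow_left : ∀ k : ℕ, (a ^ k).left = ∏ r ∈ Finset.range k, muPhi (c ^ r) a.left := by
    intro k
    induction k with
    | zero => simp
    | succ k ih =>
        rw [pow_succ, SemidirectProduct.mul_left, ih, Finset.prod_range_succ, hpow_right]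
  -- the sequence of dihedral reflections
  set d : ℕ → W := fun r => c ^ r * s i with hd
  have hsemi : ∀ k : ℕ, s i * (s j * s i) ^ k = c ^ k * s i := by
    intro k
    have : SemiconjBy (s i) (s j * s i) c := by
      simp [SemiconjBy, hc, mul_assoc]
    simpa using (this.pow_right k).eq
  have hcinv : ∀ k : ℕ, (c ^ k)⁻¹ = (s j * s i) ^ k := by
    intro k
    rw [← inv_pow, hc, mul_inv_rev, cs.inv_simple, cs.inv_simple]
  have haleft : ∀ u : W, a.left u
      = (if u = s i then (-1 : ℤˣ) else 1) * (if u = s i * s j * s i then -1 else 1) := by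
    intro u
    show (muGen cs i).left u * muPhi ((muGen cs i).right) (muGen cs j).left u = _
    show (if u = s i then (-1 : ℤˣ) else 1) *
      (if (s i)⁻¹ * u * (s i) = s j then -1 else 1) = _
    congr 1
    rw [conj_eq_iff, cs.inv_simple]
  have key : ∀ k : ℕ, ∀ t : W, (muPhi (c ^ k) a.left) t
      = (if t = d (2 * k) then (-1 : ℤˣ) else 1) * (if t = d (2 * k + 1) then -1 else 1) := by
    intro k t
    rw [muPhi_apply, haleft]
    congr 1
    · rw [conj_eq_iff]
      have : c ^ k * s i * (c ^ k)⁻¹ = d (2 * k) := by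
        rw [hd, mul_assoc, hcinv, hsemi, ← mul_assoc, ← pow_add, two_mul]
      rw [← this, mul_assoc]
    · rw [conj_eq_iff]
      have : c ^ k * (s i * s j * s i) * (c ^ k)⁻¹ = d (2 * k + 1) := by
        have h1 : s i * s j * s i = c * s i := by rw [hc]
        rw [hd, h1, mul_assoc, mul_assoc, hcinv, hsemi, ← mul_assoc, ← mul_assoc]
        have h2 : c ^ k * c * c ^ k = c ^ (2 * k + 1) := by
          rw [← pow_succ, ← pow_add]; congr 1; omega
        rw [h2]
      rw [← this, mul_assoc, mul_assoc]
  have hone : (a ^ m).left = 1 := by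
    rw [hpow_left]
    funext t
    rw [Finset.prod_apply]
    have : ∀ r ∈ Finset.range m, (muPhi (c ^ r) a.left) t
        = (fun r => if t = d r then (-1 : ℤˣ) else 1) (2 * r) *
          (fun r => if t = d r then (-1 : ℤˣ) else 1) (2 * r + 1) := by
      intro r _
      exact key r t
    rw [Finset.prod_congr rfl this]
    set g : ℕ → ℤˣ := fun r => if t = d r then (-1 : ℤˣ) else 1 with hg
    have h2 : ∏ r ∈ Finset.range m, (g (2 * r) * g (2 * r + 1))
        = ∏ r ∈ Finset.range (2 * m), g r := by
      induction m with
      | zero => simp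
      | succ p ih =>
          rw [Finset.prod_range_succ, ih, mul_add, mul_one, Finset.prod_range_succ,
            Finset.prod_range_succ, mul_assoc]
    rw [h2, two_mul, Finset.prod_range_add]
    have h3 : ∀ r : ℕ, g (m + r) = g r := by
      intro r
      simp only [hg, hd]
      rw [pow_add, hcm, one_mul]
    rw [Finset.prod_congr rfl (fun r _ => h3 r), ← Finset.prod_mul_distrib]
    have h4 : ∀ r : ℕ, g r * g r = 1 := by
      intro r
      rcases Int.units_eq_one_or (g r) with h | h <;> rw [h] <;> rfl
    rw [Finset.prod_congr rfl (fun r _ => h4 r), Finset.prod_const_one]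
    rfl
  have htwo : (a ^ m).right = 1 := by rw [hpow_right, hcm]
  ext
  · rw [hone, SemidirectProduct.one_left]
  · rw [htwo, SemidirectProduct.one_right]




/-- The sign representation `W →* (W → ℤˣ) ⋊ W`. -/
noncomputable def Phi : W →* (W → ℤˣ) ⋊[muPhi (W := W)] W :=
  cs.lift ⟨muGen cs, fun i j => muGen_liftable cs i j⟩

lemma Phi_simple (i : B) : Phi cs (s i) = muGen cs i :=
  cs.lift_apply_simple _ i

/-- The sign cocycle: `mu cs w t = -1` iff `t` is a "left inversion" of `w` (correctly
counted with multiplicity in any word for `w`). -/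
noncomputable def mu (w : W) (t : W) : ℤˣ := (Phi cs w).left t

lemma Phi_right (w : W) : (Phi cs w).right = w := by
  have : (SemidirectProduct.rightHom.comp (Phi cs)) = MonoidHom.id W := by
    apply cs.ext_simple
    intro i
    simp [Phi_simple]
    rfl
  calc (Phi cs w).right = (SemidirectProduct.rightHom.comp (Phi cs)) w := rfl
  _ = w := by rw [this]; rfl

lemma mu_one (t : W) : mu cs 1 t = 1 := by
  simp [mu]

open scoped Classical in
lemma mu_simple (i : B) (t : W) : mu cs (s i) t = if t = s i then -1 else 1 := by
  classical
  rw [mu, Phi_simple]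
  simp [muGen]

lemma mu_mul (x y t : W) : mu cs (x * y) t = mu cs x t * mu cs y (x⁻¹ * t * x) := by
  show ((Phi cs) (x * y)).left t = _
  rw [map_mul, SemidirectProduct.mul_left]
  show mu cs x t * muPhi ((Phi cs x).right) ((Phi cs y).left) t = _
  rw [Phi_right]
  rfl

lemma mu_inv (x t : W) : mu cs x⁻¹ t = mu cs x (x * t * x⁻¹) := by
  have h := mu_mul cs x x⁻¹ (x * t * x⁻¹)
  rw [mul_inv_cancel] at h
  rw [mu_one] at h
  have h2 : x⁻¹ * (x * t * x⁻¹) * x = t := by group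
  rw [h2] at h
  rcases Int.units_eq_one_or (mu cs x (x * t * x⁻¹)) with h3 | h3 <;>
    rcases Int.units_eq_one_or (mu cs x⁻¹ t) with h4 | h4 <;>
    rw [h3, h4] at h ⊢ <;> first | rfl | (exfalso; revert h; decide)

open scoped Classical in
/-- The word formula for the sign cocycle. -/
lemma mu_wordProd (ω : List B) (t : W) :
    mu cs (π ω) t = (-1 : ℤˣ) ^ (List.count t (cs.leftInvSeq ω)) := by
  classical
  induction ω generalizing t with
  | nil => simp [mu_one, CoxeterSystem.leftInvSeq]
  | cons i ω ih =>
      rw [cs.wordProd_cons, mu_mul, mu_simple, ih]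
      have hcons : cs.leftInvSeq (i :: ω) = s i :: List.map (⇑(MulAut.conj (s i))) (cs.leftInvSeq ω) := rfl
      have hmap : List.count t (List.map (⇑(MulAut.conj (s i))) (cs.leftInvSeq ω))
          = List.count ((s i)⁻¹ * t * s i) (cs.leftInvSeq ω) := by
        have h2 := List.count_map_of_injective (cs.leftInvSeq ω) (⇑(MulAut.conj (s i)))
          (MulAut.conj (s i)).injective ((s i)⁻¹ * t * s i)
        rw [← h2]
        congr 1
        rw [MulAut.conj_apply]
        group
      rw [hcons, List.count_cons, hmap, pow_add, mul_comm]
      congr 1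
      by_cases h : t = s i
      · simp [h]
      · have h' : (s i == t) = false := beq_false_of_ne fun he => h he.symm
        rw [if_neg h, h']
        simp


lemma count_pos_of_mu_neg {w t : W} {ω : List B} (hw : w = π ω)
    (h : mu cs w t = -1) : t ∈ cs.leftInvSeq ω := by
  classical
  rw [hw, mu_wordProd] at h
  by_contra hmem
  rw [List.count_eq_zero_of_not_mem hmem, pow_zero] at h
  exact absurd h (by decide)

/-- Strong exchange, upper-bound form. -/
lemma length_lt_of_mu_neg {w t : W} (h : mu cs w t = -1) : ℓ (t * w) < ℓ w := by
  obtain ⟨ω, hred, hw⟩ := cs.exists_reduced_word' w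
  have hmem : t ∈ cs.leftInvSeq ω := count_pos_of_mu_neg cs hw h
  obtain ⟨n, hn, ht⟩ := List.mem_iff_getElem.mp hmem
  rw [cs.length_leftInvSeq] at hn
  have hprod : t * π ω = π (ω.eraseIdx n) := by
    rw [← cs.getD_leftInvSeq_mul_wordProd ω n]
    congr 1
    rw [← ht, List.getD_eq_getElem]
  have h1 : ℓ (t * w) ≤ (ω.eraseIdx n).length := by
    rw [hw, hprod]; exact cs.length_wordProd_le _
  have h2 : (ω.eraseIdx n).length = ω.length - 1 := by
    rw [List.length_eraseIdx]; simp [hn]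
  have h3 : ℓ w = ω.length := by rw [hw]; exact hred
  omega

lemma mu_refl_self {t : W} (ht : cs.IsReflection t) : mu cs t t = -1 := by
  obtain ⟨v, i, rfl⟩ := ht
  have h1 : v * cs.simple i * v⁻¹ = v * (cs.simple i * v⁻¹) := by group
  rw [h1, mu_mul]
  have h2 : v⁻¹ * (v * (cs.simple i * v⁻¹)) * v = cs.simple i := by group
  rw [h2, mu_mul, mu_simple, if_pos rfl, mu_inv]
  have h3 : (cs.simple i)⁻¹ * cs.simple i * cs.simple i = cs.simple i := by group
  have h4 : v * ((cs.simple i)⁻¹ * cs.simple i * cs.simple i) * v⁻¹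
      = v * (cs.simple i * v⁻¹) := by group
  rw [h3]
  have h5 : v * cs.simple i * v⁻¹ = v * (cs.simple i * v⁻¹) := by group
  rw [← h5]
  set z := mu cs v (v * cs.simple i * v⁻¹)
  rcases Int.units_eq_one_or z with h | h <;> rw [h] <;> decide

/-- The key equivalence: `mu cs w t = -1` iff `t` is a left inversion of `w`. -/
lemma mu_neg_iff {t : W} (ht : cs.IsReflection t) (w : W) :
    mu cs w t = -1 ↔ ℓ (t * w) < ℓ w := by
  constructor
  · exact length_lt_of_mu_neg cs
  · intro h
    by_contra hmu
    have h1 : mu cs w t = 1 := by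
      rcases Int.units_eq_one_or (mu cs w t) with h' | h'
      · exact h'
      · exact absurd h' hmu
    have h2 : w = t * (t * w) := by
      rw [← mul_assoc, ht.mul_self, one_mul]
    have h3 : mu cs (t * (t * w)) t = mu cs t t * mu cs (t * w) (t⁻¹ * t * t) := mu_mul ..
    have h4 : t⁻¹ * t * t = t := by group
    rw [← h2, h1, mu_refl_self cs ht, h4] at h3
    have h5 : mu cs (t * w) t = -1 := by
      rcases Int.units_eq_one_or (mu cs (t * w) t) with h' | h'
      · rw [h'] at h3; exact absurd h3 (by decide)
      · exact h'
    have h6 := length_lt_of_mu_neg cs h5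
    rw [← mul_assoc, ht.mul_self, one_mul] at h6
    omega

lemma eq_one_of_mu_all_one {v : W} (h : ∀ t, mu cs v t = 1) : v = 1 := by
  classical
  obtain ⟨ω, hred, hv⟩ := cs.exists_reduced_word' v
  rcases ω with _ | ⟨i, ω'⟩
  · rw [hv]; rfl
  · exfalso
    set t := cs.simple i
    have hmem : t ∈ cs.leftInvSeq (i :: ω') := by
      show t ∈ t :: _
      exact List.mem_cons_self
    have hcount : List.count t (cs.leftInvSeq (i :: ω')) = 1 :=
      List.count_eq_one_of_mem (hred.nodup_leftInvSeq cs) hmem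
    have := mu_wordProd cs (i :: ω') t
    rw [← hv, hcount, pow_one, h t] at this
    exact absurd this (by decide)

section Longest

variable [Fintype W]

lemma exists_max : ∃ w₀ : W, ∀ v : W, ℓ v ≤ ℓ w₀ := Finite.exists_max _

lemma mu_max_neg {w₀ : W} (hmax : ∀ v : W, ℓ v ≤ ℓ w₀) {t : W}
    (ht : cs.IsReflection t) : mu cs w₀ t = -1 := by
  rw [mu_neg_iff cs ht]
  have h1 := hmax (t * w₀)
  have h2 := ht.length_mul_right_ne w₀
  omega

/-- `ℓ(v w₀) = ℓ(w₀) − ℓ(v)` for the longest element, additive form. -/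
lemma length_mul_max {w₀ : W} (hmax : ∀ v : W, ℓ v ≤ ℓ w₀) (v : W) :
    ℓ (v * w₀) + ℓ v = ℓ w₀ := by
  generalize hn : ℓ v = n
  induction n using Nat.strong_induction_on generalizing v with
  | _ n ih =>
    rcases eq_or_ne v 1 with rfl | hv
    · simp at hn ⊢
      omega
    · obtain ⟨i, hi⟩ := cs.exists_leftDescent_of_ne_one hv
      have hi' : ℓ (cs.simple i * v) < ℓ v := hi
      set v' := cs.simple i * v with hv'
      have hvv : v = cs.simple i * v' := by
        rw [hv', ← mul_assoc, cs.simple_mul_simple_self, one_mul]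
      have hlen : ℓ v' + 1 = ℓ v := by
        rcases cs.length_simple_mul v i with h | h <;> rw [← hv'] at h <;> omega
      have hih := ih (ℓ v') (by omega) v' rfl
      have hrefl : cs.IsReflection (v'⁻¹ * cs.simple i * v') :=
        ⟨v'⁻¹, i, by group⟩
      have hsign : mu cs (v' * w₀) (cs.simple i) = -1 := by
        have hm : mu cs (v' * w₀) (cs.simple i)
            = mu cs v' (cs.simple i) * mu cs w₀ (v'⁻¹ * cs.simple i * v') := mu_mul ..
        have h1 : mu cs v' (cs.simple i) = 1 := by
          have hns : ¬ ℓ (cs.simple i * v') < ℓ v' := by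
            rw [← hvv]; omega
          rcases Int.units_eq_one_or (mu cs v' (cs.simple i)) with h' | h'
          · exact h'
          · rw [mu_neg_iff cs (cs.isReflection_simple i)] at h'
            exact absurd h' hns
        rw [hm, h1, mu_max_neg cs hmax hrefl, one_mul]
      have hlt : ℓ (cs.simple i * (v' * w₀)) < ℓ (v' * w₀) :=
        (mu_neg_iff cs (cs.isReflection_simple i) _).mp hsign
      have heq : v * w₀ = cs.simple i * (v' * w₀) := by rw [hvv]; group
      have hstep : ℓ (cs.simple i * (v' * w₀)) + 1 = ℓ (v' * w₀) := by
        rcases cs.length_simple_mul (v' * w₀) i with h | h <;> omega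
      rw [heq, ← hn]
      omega

lemma eq_max_of_length_eq {w₀ : W} (hmax : ∀ v : W, ℓ v ≤ ℓ w₀) {w₁ : W}
    (h : ℓ w₁ = ℓ w₀) : w₁ = w₀ := by
  have h1 := length_mul_max cs hmax (w₁ * w₀⁻¹)
  rw [inv_mul_cancel_right] at h1
  have h2 : ℓ (w₁ * w₀⁻¹) = 0 := by omega
  rw [cs.length_eq_zero_iff] at h2
  have := congrArg (· * w₀) h2
  simpa using this

lemma max_inv_eq {w₀ : W} (hmax : ∀ v : W, ℓ v ≤ ℓ w₀) : w₀⁻¹ = w₀ :=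
  eq_max_of_length_eq cs hmax (cs.length_inv w₀)

lemma length_max_mul {w₀ : W} (hmax : ∀ v : W, ℓ v ≤ ℓ w₀) (v : W) :
    ℓ (w₀ * v) + ℓ v = ℓ w₀ := by
  have h1 : ℓ (w₀ * v) = ℓ (v⁻¹ * w₀) := by
    rw [← cs.length_inv (w₀ * v), mul_inv_rev, max_inv_eq cs hmax]
  rw [h1, ← cs.length_inv v]
  exact length_mul_max cs hmax v⁻¹

/-- An element all of whose right simple moves are descents is the longest element. -/
lemma eq_max_of_all_descents {w₀ : W} (hmax : ∀ v : W, ℓ v ≤ ℓ w₀) {y : W}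
    (hy : ∀ i : B, ℓ (y * cs.simple i) < ℓ y) : y = w₀ := by
  set u := y⁻¹ * w₀ with hu
  rcases eq_or_ne u 1 with h1 | h1
  · have h2 : y⁻¹ * w₀ = 1 := h1
    have := congrArg (y * ·) h2
    simpa using this.symm
  · exfalso
    obtain ⟨i, hi⟩ := cs.exists_leftDescent_of_ne_one h1
    have hi' : ℓ (cs.simple i * u) < ℓ u := hi
    have hw : w₀ = (y * cs.simple i) * (cs.simple i * u) := by
      rw [hu]; simp [mul_assoc, cs.simple_mul_simple_cancel_left]
    have hy2 : ℓ u + ℓ y = ℓ w₀ := by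
      have := length_mul_max cs hmax y⁻¹
      rw [← hu, cs.length_inv] at this
      omega
    have h3 := cs.length_mul_le (y * cs.simple i) (cs.simple i * u)
    rw [← hw] at h3
    have h4 := hy i
    omega

end Longest


section Jtheory

variable {J : Set B}

lemma simple_mem_WJ {j : B} (hj : j ∈ J) : cs.simple j ∈ WJ cs J :=
  Subgroup.subset_closure ⟨j, hj, rfl⟩

lemma wordProd_mem_WJ {ω : List B} (hω : ∀ b ∈ ω, b ∈ J) : π ω ∈ WJ cs J := by
  induction ω with
  | nil => rw [cs.wordProd_nil]; exact one_mem _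
  | cons a ω ih =>
      rw [cs.wordProd_cons]
      exact mul_mem (simple_mem_WJ cs (hω a List.mem_cons_self))
        (ih fun b hb => hω b (List.mem_cons_of_mem a hb))

lemma exists_word_of_mem_WJ {u : W} (hu : u ∈ WJ cs J) :
    ∃ ω : List B, (∀ b ∈ ω, b ∈ J) ∧ π ω = u := by
  induction hu using Subgroup.closure_induction with
  | mem x hx =>
      obtain ⟨i, hi, rfl⟩ := hx
      exact ⟨[i], by simpa using hi, cs.wordProd_singleton i⟩
  | one => exact ⟨[], by simp, cs.wordProd_nil⟩
  | mul x y hx hy ihx ihy =>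
      obtain ⟨ω₁, h₁, rfl⟩ := ihx
      obtain ⟨ω₂, h₂, rfl⟩ := ihy
      exact ⟨ω₁ ++ ω₂, by
        intro b hb
        rcases List.mem_append.mp hb with h | h
        exacts [h₁ b h, h₂ b h], cs.wordProd_append ω₁ ω₂⟩
  | inv x hx ihx =>
      obtain ⟨ω₁, h₁, rfl⟩ := ihx
      exact ⟨ω₁.reverse, fun b hb => h₁ b (List.mem_reverse.mp hb),
        cs.wordProd_reverse ω₁⟩

/-- Deletion: a non-reduced word contains a shorter subword with the same product. -/
lemma exists_shorter_word : ∀ (ω : List B), ¬ cs.IsReduced ω →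
    ∃ ω' : List B, ω'.Sublist ω ∧ π ω' = π ω ∧ ω'.length < ω.length := by
  intro ω
  induction ω using List.reverseRecOn with
  | nil =>
      intro h
      exact absurd (by simp [CoxeterSystem.IsReduced]) h
  | append_singleton χ i ih =>
      intro h
      by_cases hχ : cs.IsReduced χ
      · have hlen : ℓ (π (χ ++ [i])) < (χ ++ [i]).length :=
          lt_of_le_of_ne (cs.length_wordProd_le _) h
        have hprod : π (χ ++ [i]) = π χ * cs.simple i := by
          rw [cs.wordProd_append, cs.wordProd_singleton]
        have hdesc : ℓ (π χ * cs.simple i) < ℓ (π χ) := by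
          have h1 : ℓ (π χ) = χ.length := hχ
          have h2 := cs.length_mul_simple (π χ) i
          rw [hprod] at hlen
          simp only [List.length_append, List.length_singleton] at hlen
          omega
        -- pass to the inverse to use left inversions
        have hinv : ℓ (cs.simple i * (π χ)⁻¹) < ℓ ((π χ)⁻¹) := by
          have h1 : cs.simple i * (π χ)⁻¹ = (π χ * cs.simple i)⁻¹ := by
            rw [mul_inv_rev, cs.inv_simple]
          rw [h1, cs.length_inv, cs.length_inv]
          exact hdesc
        have hredrev : cs.IsReduced χ.reverse := (cs.isReduced_reverse_iff χ).mpr hχ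
        have hwrev : (π χ)⁻¹ = π χ.reverse := (cs.wordProd_reverse χ).symm
        have hmu : mu cs ((π χ)⁻¹) (cs.simple i) = -1 :=
          (mu_neg_iff cs (cs.isReflection_simple i) _).mpr hinv
        have hmem : cs.simple i ∈ cs.leftInvSeq χ.reverse :=
          count_pos_of_mu_neg cs hwrev hmu
        obtain ⟨n, hn, ht⟩ := List.mem_iff_getElem.mp hmem
        rw [cs.length_leftInvSeq] at hn
        have hprod2 : cs.simple i * π χ.reverse = π (χ.reverse.eraseIdx n) := by
          rw [← cs.getD_leftInvSeq_mul_wordProd χ.reverse n]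
          congr 1
          rw [← ht, List.getD_eq_getElem]
        refine ⟨(χ.reverse.eraseIdx n).reverse, ?_, ?_, ?_⟩
        · have h1 : (χ.reverse.eraseIdx n).Sublist χ.reverse := List.eraseIdx_sublist _ n
          have h2 := h1.reverse
          rw [List.reverse_reverse] at h2
          exact h2.trans (List.sublist_append_left χ [i])
        · rw [cs.wordProd_reverse, ← hprod2, hprod]
          rw [← hwrev]
          rw [mul_inv_rev, cs.inv_simple, inv_inv]
        · have hn' : n < χ.reverse.length := hn
          rw [List.length_reverse, List.length_eraseIdx]
          simp only [List.length_reverse] at hn' ⊢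
          rw [if_pos hn']
          simp only [List.length_append, List.length_singleton]
          omega
      · obtain ⟨χ', hsub, hprodeq, hlt⟩ := ih hχ
        refine ⟨χ' ++ [i], hsub.append (List.Sublist.refl [i]), ?_, ?_⟩
        · rw [cs.wordProd_append, cs.wordProd_append, hprodeq]
        · simp only [List.length_append, List.length_singleton]
          omega

lemma exists_reduced_subword : ∀ (n : ℕ) (ω : List B), ω.length ≤ n →
    ∃ ω' : List B, (∀ b ∈ ω', b ∈ ω) ∧ cs.IsReduced ω' ∧ π ω' = π ω := by
  intro n
  induction n with
  | zero =>
      intro ω hlen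
      have : ω = [] := List.eq_nil_of_length_eq_zero (by omega)
      subst this
      exact ⟨[], by simp, by simp [CoxeterSystem.IsReduced], rfl⟩
  | succ n ih =>
      intro ω hlen
      by_cases hred : cs.IsReduced ω
      · exact ⟨ω, fun b hb => hb, hred, rfl⟩
      · obtain ⟨ω₁, hsub, hprodeq, hlt⟩ := exists_shorter_word cs ω hred
        obtain ⟨ω', hb, hred', hprod'⟩ := ih ω₁ (by omega)
        exact ⟨ω', fun b hb' => hsub.subset (hb b hb'), hred', by rw [hprod', hprodeq]⟩

lemma exists_reduced_J_word {u : W} (hu : u ∈ WJ cs J) :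
    ∃ ω : List B, (∀ b ∈ ω, b ∈ J) ∧ cs.IsReduced ω ∧ π ω = u := by
  obtain ⟨ω, hJ, hprod⟩ := exists_word_of_mem_WJ cs hu
  obtain ⟨ω', hsub, hred, hprod'⟩ := exists_reduced_subword cs ω.length ω le_rfl
  exact ⟨ω', fun b hb => hJ b (hsub b hb), hred, by rw [hprod', hprod]⟩

lemma leftInvSeq_append (α ω : List B) :
    cs.leftInvSeq (α ++ ω)
      = cs.leftInvSeq α ++ (cs.leftInvSeq ω).map (MulAut.conj (π α)) := by
  induction α with
  | nil => simp [CoxeterSystem.leftInvSeq]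
  | cons a α ih =>
      show cs.simple a :: (cs.leftInvSeq (α ++ ω)).map _ = _
      rw [ih, List.map_append, List.map_map]
      show _ = cs.simple a :: ((cs.leftInvSeq α).map (MulAut.conj (cs.simple a))
        ++ (cs.leftInvSeq ω).map (MulAut.conj (π (a :: α))))
      congr 2
      rw [cs.wordProd_cons, map_mul]
      rfl

lemma exchange_of_mem_leftInvSeq {ω : List B} {t : W} (ht : t ∈ cs.leftInvSeq ω) :
    ∃ n, n < ω.length ∧ t * π ω = π (ω.eraseIdx n) := by
  obtain ⟨n, hn, hget⟩ := List.mem_iff_getElem.mp ht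
  rw [cs.length_leftInvSeq] at hn
  refine ⟨n, hn, ?_⟩
  rw [← cs.getD_leftInvSeq_mul_wordProd ω n]
  congr 1
  rw [← hget, List.getD_eq_getElem]

/-- Lengths add on a coset of `W_J` with a minimal representative. -/
lemma length_WJ_word_mul {w : W} (hw : IsMinRep cs J w) :
    ∀ (α : List B), (∀ b ∈ α, b ∈ J) → cs.IsReduced α →
      ℓ (π α * w) = α.length + ℓ w := by
  intro α
  induction α with
  | nil => simp
  | cons j α ih =>
      intro hJ hred
      have hredα : cs.IsReduced α := by
        have := CoxeterSystem.IsReduced.drop (ω := j :: α) hred 1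
        simpa using this
      have hJα : ∀ b ∈ α, b ∈ J := fun b hb => hJ b (List.mem_cons_of_mem j hb)
      have hIH : ℓ (π α * w) = α.length + ℓ w := ih hJα hredα
      obtain ⟨ω, hredω, hwω⟩ := cs.exists_reduced_word' w
      have hχred : cs.IsReduced (α ++ ω) := by
        show ℓ (π (α ++ ω)) = _
        rw [cs.wordProd_append, ← hwω, List.length_append]
        have h2 : ℓ (π ω) = ω.length := hredω
        rw [hIH, hwω, h2]
      have hχprod : π (α ++ ω) = π α * w := by rw [cs.wordProd_append, ← hwω]
      rw [cs.wordProd_cons, mul_assoc]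
      simp only [List.length_cons]
      -- goal : ℓ (s j * (π α * w)) = α.length + 1 + ℓ w
      by_contra hne
      have hne2 := cs.length_simple_mul_ne (π α * w) j
      have hlt : ℓ (cs.simple j * (π α * w)) < ℓ (π α * w) := by
        rcases cs.length_simple_mul (π α * w) j with h | h
        · omega
        · omega
      have hmu : mu cs (π α * w) (cs.simple j) = -1 :=
        (mu_neg_iff cs (cs.isReflection_simple j) _).mpr hlt
      have hmem : cs.simple j ∈ cs.leftInvSeq (α ++ ω) :=
        count_pos_of_mu_neg cs hχprod.symm hmu
      rw [leftInvSeq_append] at hmem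
      rcases List.mem_append.mp hmem with hmem | hmem
      · -- deletion inside the J-word: contradicts reducedness of j :: α
        obtain ⟨n, hn, hex⟩ := exchange_of_mem_leftInvSeq cs hmem
        have h1 : ℓ (cs.simple j * π α) ≤ (α.eraseIdx n).length :=
          hex ▸ cs.length_wordProd_le _
        have h2 : (α.eraseIdx n).length = α.length - 1 := by
          rw [List.length_eraseIdx]
          simp [hn]
        have h3 : ℓ (cs.simple j * π α) = α.length + 1 := by
          have : cs.simple j * π α = π (j :: α) := (cs.wordProd_cons j α).symm
          rw [this, hred]
          simp
        omega
      · -- deletion inside the w-word: contradicts minimality of w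
        obtain ⟨t', ht'mem, ht'⟩ := List.mem_map.mp hmem
        have ht'inv : cs.IsLeftInversion (π ω) t' :=
          cs.isLeftInversion_of_mem_leftInvSeq hredω ht'mem
        have ht'WJ : t' ∈ WJ cs J := by
          have h1 : t' = (π α)⁻¹ * cs.simple j * π α := by
            rw [← ht']
            simp [MulAut.conj_apply]
            group
          rw [h1]
          exact mul_mem (mul_mem (inv_mem (wordProd_mem_WJ cs hJα))
            (simple_mem_WJ cs (hJ j List.mem_cons_self))) (wordProd_mem_WJ cs hJα)
        have := hw t' ht'WJ
        rw [← hwω] at ht'inv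
        exact absurd this (by have := ht'inv.2; omega)

lemma length_WJ_mul {w : W} (hw : IsMinRep cs J w) {u : W} (hu : u ∈ WJ cs J) :
    ℓ (u * w) = ℓ u + ℓ w := by
  obtain ⟨α, hJ, hred, hprod⟩ := exists_reduced_J_word cs hu
  have h1 : ℓ u = α.length := by rw [← hprod]; exact hred
  rw [← hprod, length_WJ_word_mul cs hw α hJ hred]
  have h2 : ℓ (π α) = α.length := hred
  rw [h2]

end Jtheory



section Jtheory2

variable {J : Set B}

lemma isMinRep_one : IsMinRep cs J (1 : W) := by
  intro u hu
  simp

lemma length_lt_of_isMinRep {w : W} (hw : IsMinRep cs J w) {j : B} (hj : j ∈ J) :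
    ℓ w < ℓ (cs.simple j * w) := by
  have h1 := hw (cs.simple j) (simple_mem_WJ cs hj)
  have h2 := cs.length_simple_mul_ne w j
  omega

/-- Characterization: if all `j ∈ J` are left ascents then `w` is a minimal
coset representative. -/
lemma isMinRep_of_ascents {w : W} [Fintype W]
    (h : ∀ j ∈ J, ℓ w < ℓ (cs.simple j * w)) : IsMinRep cs J w := by
  classical
  set Sset : Set W := {v | ∃ u ∈ WJ cs J, v = u * w} with hSset
  have hwS : w ∈ Sset := ⟨1, one_mem _, (one_mul w).symm⟩
  have : ∃ t₀ : Sset, ∀ t : Sset, ℓ (t₀ : W) ≤ ℓ (t : W) := by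
    haveI : Nonempty Sset := ⟨⟨w, hwS⟩⟩
    exact Finite.exists_min _
  obtain ⟨⟨w', hw'S⟩, hmin⟩ := this
  obtain ⟨u₁, hu₁, hw'⟩ := hw'S
  have hminrep : IsMinRep cs J w' := by
    intro u hu
    have hmem : u * w' ∈ Sset := by
      refine ⟨u * u₁, mul_mem hu hu₁, ?_⟩
      rw [hw', mul_assoc]
    exact hmin ⟨u * w', hmem⟩
  have hwdec : w = u₁⁻¹ * w' := by rw [hw']; group
  have hadd : ℓ w = ℓ u₁⁻¹ + ℓ w' := by
    rw [hwdec]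
    exact length_WJ_mul cs hminrep (inv_mem hu₁)
  rcases eq_or_ne u₁⁻¹ 1 with h1 | h1
  · rw [h1, one_mul] at hwdec
    rw [hwdec]
    exact hminrep
  · exfalso
    obtain ⟨α, hJα, hredα, hprodα⟩ := exists_reduced_J_word cs (inv_mem hu₁)
    rcases α with _ | ⟨j, α'⟩
    · exact h1 (by rw [← hprodα]; rfl)
    · have hj : j ∈ J := hJα j List.mem_cons_self
      have hα' : ∀ b ∈ α', b ∈ J := fun b hb => hJα b (List.mem_cons_of_mem j hb)
      have hredα' : cs.IsReduced α' := by
        have := CoxeterSystem.IsReduced.drop (ω := j :: α') hredα 1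
        simpa using this
      have hsw : cs.simple j * w = π α' * w' := by
        rw [hwdec, ← hprodα, cs.wordProd_cons, ← mul_assoc, ← mul_assoc,
          cs.simple_mul_simple_self, one_mul]
      have hlen1 : ℓ (π α' * w') = α'.length + ℓ w' :=
        length_WJ_word_mul cs hminrep α' hα' hredα'
      have hlen2 : ℓ u₁⁻¹ = α'.length + 1 := by
        rw [← hprodα]
        have h2 : ℓ (π (j :: α')) = (j :: α').length := hredα
        rw [h2]
        simp
      have := h j hj
      rw [hsw] at this
      omega

/-- Deodhar's lemma (the case needed): if `w ∈ ᴶW`, `ws_i > w` and `ws_i ∉ ᴶW`,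
then `ws_i = s_j w` for some `j ∈ J`. -/
lemma deodhar [Fintype W] {w : W} (hw : IsMinRep cs J w) {i : B}
    (hasc : ℓ w < ℓ (w * cs.simple i)) (hnm : ¬ IsMinRep cs J (w * cs.simple i)) :
    ∃ j ∈ J, cs.simple j * w = w * cs.simple i := by
  classical
  have hdesc : ∃ j ∈ J, ℓ (cs.simple j * (w * cs.simple i)) < ℓ (w * cs.simple i) := by
    by_contra hcon
    push_neg at hcon
    refine hnm (isMinRep_of_ascents cs ?_)
    intro j hj
    have h1 := hcon j hj
    have h2 := cs.length_simple_mul_ne (w * cs.simple i) j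
    omega
  obtain ⟨j, hj, hlt⟩ := hdesc
  obtain ⟨ω, hredω, hwω⟩ := cs.exists_reduced_word' w
  have hχprod : π (ω ++ [i]) = w * cs.simple i := by
    rw [cs.wordProd_append, cs.wordProd_singleton, ← hwω]
  have hmu : mu cs (w * cs.simple i) (cs.simple j) = -1 :=
    (mu_neg_iff cs (cs.isReflection_simple j) _).mpr hlt
  have hmem : cs.simple j ∈ cs.leftInvSeq (ω ++ [i]) :=
    count_pos_of_mu_neg cs hχprod.symm hmu
  rw [leftInvSeq_append] at hmem
  rcases List.mem_append.mp hmem with hmem | hmem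
  · -- exchange inside the word of w : contradiction with minimality
    exfalso
    obtain ⟨n, hn, hex⟩ := exchange_of_mem_leftInvSeq cs hmem
    have h1 : ℓ (cs.simple j * π ω) ≤ (ω.eraseIdx n).length :=
      hex ▸ cs.length_wordProd_le _
    have h2 : (ω.eraseIdx n).length = ω.length - 1 := by
      rw [List.length_eraseIdx, if_pos hn]
    have h3 : ℓ (π ω) = ω.length := hredω
    have h4 := length_lt_of_isMinRep cs hw hj
    rw [hwω] at h4
    omega
  · -- the exchanged letter is the appended `i`
    simp only [CoxeterSystem.leftInvSeq_singleton, List.map_singleton,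
      List.mem_singleton] at hmem
    refine ⟨j, hj, ?_⟩
    rw [hmem, MulAut.conj_apply, ← hwω]
    group

/-- rigidity: a `φ`-fixed minimal representative conjugated up by the longest element
of `W_J` is the longest element of `W`. -/
lemma fixed_mul_eq_max [Fintype W] {x : W} (hx : IsMinRep cs J x)
    (hP : ∀ i : B, IsMinRep cs J (x * cs.simple i) → ℓ (x * cs.simple i) < ℓ x)
    {uJ : W} (huJ : uJ ∈ WJ cs J) (huJmax : ∀ u ∈ WJ cs J, ℓ u ≤ ℓ uJ)
    {w₀ : W} (hmax : ∀ v : W, ℓ v ≤ ℓ w₀) :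
    uJ * x = w₀ := by
  apply eq_max_of_all_descents cs hmax
  intro i
  have hlen : ℓ (uJ * x) = ℓ uJ + ℓ x := length_WJ_mul cs hx huJ
  have hne := cs.length_mul_simple_ne x i
  rcases lt_or_gt_of_ne hne with hdesc | hasc
  · -- descent of x at i
    calc ℓ (uJ * x * cs.simple i) = ℓ (uJ * (x * cs.simple i)) := by rw [mul_assoc]
    _ ≤ ℓ uJ + ℓ (x * cs.simple i) := cs.length_mul_le _ _
    _ < ℓ uJ + ℓ x := by omega
    _ = ℓ (uJ * x) := hlen.symm
  · -- ascent of x at i : use Deodhar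
    have hnm : ¬ IsMinRep cs J (x * cs.simple i) := fun hm => by
      have := hP i hm; omega
    obtain ⟨j, hj, hcomm⟩ := deodhar cs hx hasc hnm
    have h1 : uJ * x * cs.simple i = (uJ * cs.simple j) * x := by
      rw [mul_assoc, ← hcomm, ← mul_assoc]
    have h2 : ℓ (uJ * cs.simple j) < ℓ uJ := by
      have h3 := huJmax (uJ * cs.simple j) (mul_mem huJ (simple_mem_WJ cs hj))
      have h4 := cs.length_mul_simple_ne uJ j
      omega
    calc ℓ (uJ * x * cs.simple i) = ℓ ((uJ * cs.simple j) * x) := by rw [h1]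
    _ ≤ ℓ (uJ * cs.simple j) + ℓ x := cs.length_mul_le _ _
    _ < ℓ uJ + ℓ x := by omega
    _ = ℓ (uJ * x) := hlen.symm

end Jtheory2


section PhiFix

variable {J : Set B}

lemma phiJ_true_fix_iff (i : B) (w : W) :
    phiJ cs J i true w = w
      ↔ (IsMinRep cs J (w * cs.simple i) → ℓ (w * cs.simple i) < ℓ w) := by
  classical
  have hne := cs.length_mul_simple_ne w i
  have hwne : w * cs.simple i ≠ w := fun h => hne (by rw [h])
  by_cases hm : IsMinRep cs J (w * cs.simple i)
  · have hmul : mulJ cs J w i = w * cs.simple i := if_pos hm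
    by_cases hc : ℓ w ≤ ℓ (w * cs.simple i)
    · have hphi : phiJ cs J i true w = w * cs.simple i := by
        simp only [phiJ, hmul, if_true]
        rw [if_pos hc]
      rw [hphi]
      exact ⟨fun h => absurd h hwne, fun h => absurd (h hm) (by omega)⟩
    · have hphi : phiJ cs J i true w = w := by
        simp only [phiJ, hmul, if_true]
        rw [if_neg hc]
      rw [hphi]
      exact ⟨fun _ _ => by omega, fun _ => rfl⟩
  · have hmul : mulJ cs J w i = w := if_neg hm
    have hphi : phiJ cs J i true w = w := by
      simp only [phiJ, hmul, if_true, le_refl, if_pos]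
    rw [hphi]
    exact ⟨fun _ hm2 => absurd hm2 hm, fun _ => rfl⟩

lemma phiJ_true_le (i : B) (w : W) : ℓ w ≤ ℓ (phiJ cs J i true w) := by
  classical
  by_cases hc : ℓ w ≤ ℓ (mulJ cs J w i)
  · have hphi : phiJ cs J i true w = mulJ cs J w i := by
      simp only [phiJ, if_true]
      rw [if_pos hc]
    rw [hphi]; exact hc
  · have hphi : phiJ cs J i true w = w := by
      simp only [phiJ, if_true]
      rw [if_neg hc]
    rw [hphi]

lemma phiJ_true_lt_of_ne (i : B) (w : W) (hne : phiJ cs J i true w ≠ w) :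
    ℓ w < ℓ (phiJ cs J i true w) := by
  classical
  by_cases hc : ℓ w ≤ ℓ (mulJ cs J w i)
  · have hphi : phiJ cs J i true w = mulJ cs J w i := by
      simp only [phiJ, if_true]
      rw [if_pos hc]
    by_cases hm : IsMinRep cs J (w * cs.simple i)
    · have hmul : mulJ cs J w i = w * cs.simple i := if_pos hm
      have h1 := cs.length_mul_simple_ne w i
      rw [hmul] at hc
      rw [hphi, hmul]
      omega
    · have hmul : mulJ cs J w i = w := if_neg hm
      rw [hphi, hmul] at hne
      exact absurd rfl hne
  · have hphi : phiJ cs J i true w = w := by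
      simp only [phiJ, if_true]
      rw [if_neg hc]
    exact absurd hphi hne

lemma foldl_phiJ_le : ∀ (l : List (B × Bool)), (∀ p ∈ l, p.2 = true) → ∀ (x : W),
    ℓ x ≤ ℓ (l.foldl (fun v p => phiJ cs J p.1 p.2 v) x) := by
  intro l
  induction l with
  | nil => intro _ x; exact le_refl _
  | cons p l ih =>
      intro hl x
      rw [List.foldl_cons]
      have hp : p.2 = true := hl p List.mem_cons_self
      have h1 : ℓ x ≤ ℓ (phiJ cs J p.1 p.2 x) := by
        rw [hp]; exact phiJ_true_le cs p.1 x
      exact h1.trans (ih (fun q hq => hl q (List.mem_cons_of_mem p hq)) _)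

lemma foldl_phiJ_fixed : ∀ (l : List (B × Bool)), (∀ p ∈ l, p.2 = true) → ∀ {w : W},
    l.foldl (fun v p => phiJ cs J p.1 p.2 v) w = w → ∀ p ∈ l, phiJ cs J p.1 p.2 w = w := by
  intro l
  induction l with
  | nil => intro _ w _ p hp; exact absurd hp List.not_mem_nil
  | cons p l ih =>
      intro hl w h q hq
      obtain ⟨pi, pb⟩ := p
      have hp : pb = true := hl (pi, pb) List.mem_cons_self
      subst hp
      have hltail : ∀ r ∈ l, r.2 = true := fun r hr => hl r (List.mem_cons_of_mem _ hr)
      rw [List.foldl_cons] at h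
      have h6 : List.foldl (fun v p => phiJ cs J p.1 p.2 v) (phiJ cs J pi true w) l = w := h
      have h2 : ℓ (phiJ cs J pi true w) ≤ ℓ w := by
        have h5 := foldl_phiJ_le cs (J := J) l hltail (phiJ cs J pi true w)
        rw [h6] at h5
        exact h5
      have h3 : phiJ cs J pi true w = w := by
        by_contra hne
        have := phiJ_true_lt_of_ne cs (J := J) pi w hne
        omega
      rcases List.mem_cons.mp hq with rfl | hq'
      · exact h3
      · rw [h3] at h6
        exact ih hltail h6 q hq'

lemma foldl_phiJ_fix_of_forall : ∀ (l : List (B × Bool)), ∀ {w : W},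
    (∀ p ∈ l, phiJ cs J p.1 p.2 w = w) →
    l.foldl (fun v p => phiJ cs J p.1 p.2 v) w = w := by
  intro l
  induction l with
  | nil => intro w _; rfl
  | cons p l ih =>
      intro w h
      rw [List.foldl_cons, h p List.mem_cons_self]
      exact ih fun q hq => h q (List.mem_cons_of_mem p hq)

lemma phiJSeq_eq_foldl {n : ℕ} (σ : Fin n → B) (b : Fin n → Bool) (w : W) :
    phiJSeq cs J σ b w
      = (List.ofFn fun k : Fin n => ((σ k : B), (b k : Bool))).foldl
          (fun v p => phiJ cs J p.1 p.2 v) w := by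
  rw [phiJSeq, phiJUpTo]
  congr 1
  apply List.take_of_length_le
  simp

lemma phiJSeq_allTrue_iff {n : ℕ} {σ : Fin n → B} (hσ : ∀ j : B, ∃ k : Fin n, σ k = j)
    (w : W) :
    phiJSeq cs J σ (fun _ => true) w = w
      ↔ ∀ i : B, IsMinRep cs J (w * cs.simple i) → ℓ (w * cs.simple i) < ℓ w := by
  rw [phiJSeq_eq_foldl]
  set l := List.ofFn fun k : Fin n => ((σ k : B), (true : Bool)) with hl
  have hltrue : ∀ p ∈ l, p.2 = true := by
    intro p hp
    rw [hl, List.mem_ofFn] at hp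
    obtain ⟨k, rfl⟩ := hp
    rfl
  constructor
  · intro h i
    obtain ⟨k, hk⟩ := hσ i
    have hmem : (i, true) ∈ l := by
      rw [hl, List.mem_ofFn]
      exact ⟨k, by simp [hk]⟩
    have hfix := foldl_phiJ_fixed cs l hltrue h (i, true) hmem
    exact (phiJ_true_fix_iff cs i w).mp hfix
  · intro hP
    apply foldl_phiJ_fix_of_forall
    intro p hp
    rw [hl, List.mem_ofFn] at hp
    obtain ⟨k, rfl⟩ := hp
    exact (phiJ_true_fix_iff cs (σ k) w).mpr (hP (σ k))

end PhiFix

end Development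

end Paper

namespace Paper

open scoped Classical in
/-- If the word `σ = (s_1,…,s_n)` contains every simple reflection of `S`,
then the unique maximal element of `ᴶW` is the only `w ∈ ᴶW` satisfying
`φ_{J,σ,(1,…,1)}(w) = w`. Consequently `c_J(σ)` is a monic polynomial of degree `n` in `q`:
`c_J(σ) = q^n + (terms of degree < n)`. -/
theorem cJ_monic {B W : Type*} [Group W] [Fintype W] {M : CoxeterMatrix B}
    (cs : CoxeterSystem M W) (J : Set B) {n : ℕ} (σ : Fin n → B)
    (hσ : ∀ j : B, ∃ i : Fin n, σ i = j) :
    (∃! w : W, IsMinRep cs J w ∧ phiJSeq cs J σ (fun _ => true) w = w) ∧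
    (∀ w : W, IsMinRep cs J w → phiJSeq cs J σ (fun _ => true) w = w →
      ∀ v : W, IsMinRep cs J v → cs.length v ≤ cs.length w) ∧
    (∃ r : ℤ[X], r.degree < n ∧
      (∑ w : W, ∑ b : Fin n → Bool,
          (if IsMinRep cs J w ∧ phiJSeq cs J σ b w = w then (X : ℤ[X]) ^ wt b else 0))
        = X ^ n + r) := by
  classical
  obtain ⟨w₀, hmax⟩ : ∃ w₀ : W, ∀ v : W, cs.length v ≤ cs.length w₀ := Finite.exists_max _
  haveI : Nonempty {u : W // u ∈ WJ cs J} := ⟨⟨1, one_mem _⟩⟩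
  obtain ⟨⟨uJ, huJ⟩, huJmax'⟩ :=
    Finite.exists_max (fun u : {u : W // u ∈ WJ cs J} => cs.length (u : W))
  have huJmax : ∀ u ∈ WJ cs J, cs.length u ≤ cs.length uJ := fun u hu => huJmax' ⟨u, hu⟩
  haveI : Nonempty {v : W // IsMinRep cs J v} := ⟨⟨1, isMinRep_one cs⟩⟩
  obtain ⟨⟨wstar, hwstar⟩, hwsmax'⟩ :=
    Finite.exists_max (fun v : {v : W // IsMinRep cs J v} => cs.length (v : W))
  have hwsmax : ∀ v : W, IsMinRep cs J v → cs.length v ≤ cs.length wstar :=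
    fun v hv => hwsmax' ⟨v, hv⟩
  set bT : Fin n → Bool := fun _ => true with hbT
  have hPstar : ∀ i : B, IsMinRep cs J (wstar * cs.simple i) →
      cs.length (wstar * cs.simple i) < cs.length wstar := by
    intro i hm
    have h1 := hwsmax _ hm
    have h2 := cs.length_mul_simple_ne wstar i
    omega
  have hstarfix : phiJSeq cs J σ bT wstar = wstar :=
    (phiJSeq_allTrue_iff cs hσ wstar).mpr hPstar
  have huniq : ∀ x : W, IsMinRep cs J x → phiJSeq cs J σ bT x = x → x = wstar := by
    intro x hx hfx
    have h1 := fixed_mul_eq_max cs hx ((phiJSeq_allTrue_iff cs hσ x).mp hfx) huJ huJmax hmax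
    have h2 := fixed_mul_eq_max cs hwstar hPstar huJ huJmax hmax
    exact mul_left_cancel (h1.trans h2.symm)
  refine ⟨⟨wstar, ⟨hwstar, hstarfix⟩, fun x hx => huniq x hx.1 hx.2⟩, ?_, ?_⟩
  · intro w hw hfw v hv
    rw [huniq w hw hfw]
    exact hwsmax v hv
  · -- the polynomial identity
    have hwtT : wt bT = n := by
      simp [wt, hbT]
    have hwtlt : ∀ b : Fin n → Bool, b ≠ bT → wt b < n := by
      intro b hb
      have hex : ∃ i, b i = false := by
        by_contra hall
        push_neg at hall
        refine hb (funext fun i => ?_)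
        have := hall i
        simpa [hbT] using this
      obtain ⟨i0, hi0⟩ := hex
      have h1 : wt b < ∑ _i : Fin n, 1 := by
        refine Finset.sum_lt_sum (fun i _ => ?_) ⟨i0, Finset.mem_univ _, by simp [hi0]⟩
        by_cases h : b i <;> simp [h]
      simpa using h1
    refine ⟨∑ w : W, ∑ b ∈ Finset.univ.erase bT,
      (if IsMinRep cs J w ∧ phiJSeq cs J σ b w = w then (X : ℤ[X]) ^ wt b else 0), ?_, ?_⟩
    · -- degree bound
      refine lt_of_le_of_lt (Polynomial.degree_sum_le _ _) ?_
      rw [Finset.sup_lt_iff (by exact_mod_cast WithBot.bot_lt_coe n)]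
      intro w _
      refine lt_of_le_of_lt (Polynomial.degree_sum_le _ _) ?_
      rw [Finset.sup_lt_iff (by exact_mod_cast WithBot.bot_lt_coe n)]
      intro b hb
      have hbne : b ≠ bT := (Finset.mem_erase.mp hb).1
      by_cases hcond : IsMinRep cs J w ∧ phiJSeq cs J σ b w = w
      · rw [if_pos hcond, Polynomial.degree_X_pow]
        exact_mod_cast hwtlt b hbne
      · rw [if_neg hcond, Polynomial.degree_zero]
        exact_mod_cast WithBot.bot_lt_coe n
    · -- the sum splits
      have hsplit : ∀ w : W, (∑ b : Fin n → Bool,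
            (if IsMinRep cs J w ∧ phiJSeq cs J σ b w = w then (X : ℤ[X]) ^ wt b else 0))
          = (if IsMinRep cs J w ∧ phiJSeq cs J σ bT w = w then (X : ℤ[X]) ^ wt bT else 0)
            + ∑ b ∈ Finset.univ.erase bT,
              (if IsMinRep cs J w ∧ phiJSeq cs J σ b w = w then (X : ℤ[X]) ^ wt b else 0) :=
        fun w => (Finset.add_sum_erase _ _ (Finset.mem_univ bT)).symm
      rw [Finset.sum_congr rfl (fun w _ => hsplit w), Finset.sum_add_distrib]
      congr 1
      rw [Finset.sum_eq_single wstar]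
      · rw [if_pos ⟨hwstar, hstarfix⟩, hwtT]
      · intro x _ hxne
        rw [if_neg]
        rintro ⟨h1, h2⟩
        exact hxne (huniq x h1 h2)
      · intro h
        exact absurd (Finset.mem_univ wstar) h

end Paper
end
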